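/- Suppose the standing assumptions hold (x_1,…,x_n i.i.d. from q0 with q0 ∈ Q^adm_{q0}(𝒳), every p_θ ∈ Q^adm_{q0}(𝒳), and the PMF estimate q̂_α ∈ Q^adm_{q0}(𝒳) almost surely), together with Assumption A2, Assumption A3, and Assumption A4(r) for r = 1. Then sup_{θ∈Θ} |L̂_n(θ) − L(θ)| → 0 almost surely as n → ∞. -/

import Mathlib

open MeasureTheory Filter Topology ProbabilityTheory

/-- Strong law of large numbers for a function of i.i.d. countable-valued data. -/
lemma slln_aux {𝒳 : Type*} [Countable 𝒳] [MeasurableSpace 𝒳] [MeasurableSingletonClass 𝒳]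
    {Ω : Type*} [MeasurableSpace Ω] (μ : Measure Ω) [IsProbabilityMeasure μ]
    (q0 : 𝒳 → ℝ) (hq0_nonneg : ∀ x, 0 ≤ q0 x)
    (X : ℕ → Ω → 𝒳) (hX_meas : ∀ i, Measurable (X i))
    (hX_dist : ∀ i x, μ (X i ⁻¹' {x}) = ENNReal.ofReal (q0 x))
    (hX_indep : iIndepFun X μ)
    (φ : 𝒳 → ℝ) (hφ : Summable fun x => q0 x * |φ x|) :
    ∀ᵐ ω ∂μ, Tendsto (fun n : ℕ => (∑ i ∈ Finset.range n, φ (X i ω)) / n) atTop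
      (𝓝 (∑' x, q0 x * φ x)) := by
  have mφ : Measurable φ := measurable_of_countable φ
  have hmap : ∀ i, Measure.map (X i) μ = Measure.map (X 0) μ := by
    intro i
    refine MeasureTheory.Measure.ext_of_singleton (fun a => ?_)
    rw [Measure.map_apply (hX_meas i) (measurableSet_singleton a),
        Measure.map_apply (hX_meas 0) (measurableSet_singleton a), hX_dist, hX_dist]
  have hident : ∀ i, IdentDistrib (X i) (X 0) μ μ := fun i =>
    ⟨(hX_meas i).aemeasurable, (hX_meas 0).aemeasurable, hmap i⟩
  have hsing : ∀ a : 𝒳, (Measure.map (X 0) μ) {a} = ENNReal.ofReal (q0 a) := fun a => by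
    rw [Measure.map_apply (hX_meas 0) (measurableSet_singleton a), hX_dist]
  have hintφ : Integrable φ (Measure.map (X 0) μ) := by
    refine ⟨mφ.aestronglyMeasurable, ?_⟩
    show (∫⁻ a, (‖φ a‖₊ : ENNReal) ∂(Measure.map (X 0) μ)) < ⊤
    rw [MeasureTheory.lintegral_countable']
    have h : ∀ a : 𝒳, (‖φ a‖₊ : ENNReal) * (Measure.map (X 0) μ) {a}
        = ENNReal.ofReal (q0 a * |φ a|) := by
      intro a
      rw [hsing, ← enorm_eq_nnnorm, Real.enorm_eq_ofReal_abs, ← ENNReal.ofReal_mul (abs_nonneg _), mul_comm]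
    rw [tsum_congr h, ← ENNReal.ofReal_tsum_of_nonneg
      (fun a => mul_nonneg (hq0_nonneg a) (abs_nonneg _)) hφ]
    exact ENNReal.ofReal_lt_top
  have hint : Integrable (fun ω => φ (X 0 ω)) μ :=
    (integrable_map_measure mφ.aestronglyMeasurable (hX_meas 0).aemeasurable).mp hintφ
  have hindep : Pairwise (Function.onFun (IndepFun · · μ) fun i ω => φ (X i ω)) := fun i j hij =>
    (hX_indep.indepFun hij).comp mφ mφ
  have hid2 : ∀ i, IdentDistrib (fun ω => φ (X i ω)) (fun ω => φ (X 0 ω)) μ μ := fun i =>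
    (hident i).comp mφ
  have hsl := strong_law_ae_real (fun i ω => φ (X i ω)) hint hindep hid2
  have hEq : μ[fun ω => φ (X 0 ω)] = ∑' x, q0 x * φ x := by
    have h1 : ∫ ω, φ (X 0 ω) ∂μ = ∫ y, φ y ∂(Measure.map (X 0) μ) :=
      (integral_map (hX_meas 0).aemeasurable mφ.aestronglyMeasurable).symm
    rw [show μ[fun ω => φ (X 0 ω)] = ∫ ω, φ (X 0 ω) ∂μ from rfl, h1, integral_countable' hintφ]
    exact tsum_congr fun a => by
      rw [measureReal_def, hsing, smul_eq_mul, ENNReal.toReal_ofReal (hq0_nonneg a)]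
  rwa [hEq] at hsl

/-- A Cauchy-Schwarz style summability criterion. -/
lemma summable_mul_of_sq {𝒳 : Type*} {q a b : 𝒳 → ℝ} (hq : ∀ x, 0 ≤ q x)
    (ha : ∀ x, 0 ≤ a x) (hb : ∀ x, 0 ≤ b x)
    (hA : Summable fun x => q x * a x ^ 2) (hB : Summable fun x => q x * b x ^ 2) :
    Summable fun x => q x * (a x * b x) := by
  refine Summable.of_nonneg_of_le
    (fun x => mul_nonneg (hq x) (mul_nonneg (ha x) (hb x))) (fun x => ?_)
    ((hA.add hB).mul_left (1/2))
  have h1 : 2 * a x * b x ≤ a x ^ 2 + b x ^ 2 := two_mul_le_add_sq (a x) (b x)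
  have h2 := mul_le_mul_of_nonneg_left h1 (hq x)
  nlinarith [hq x]

/-- Polynomials are dominated by exponentials. -/
lemma poly_le_exp_aux {c : ℝ} (hc : 0 < c) (γ : ℝ) (hγ : 0 ≤ γ) :
    ∃ C : ℝ, 0 < C ∧ ∀ t : ℝ, 0 ≤ t → (1 + t ^ γ) ^ 2 ≤ C * Real.exp (c * t) := by
  have key : ∀ (j : ℕ) (t : ℝ), 0 ≤ t → t ^ j ≤ (j.factorial : ℝ) / c ^ j * Real.exp (c * t) := by
    intro j t ht
    have h1 : (c * t) ^ j / (j.factorial : ℝ) ≤ Real.exp (c * t) := by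
      calc (c * t) ^ j / (j.factorial : ℝ)
          ≤ ∑ i ∈ Finset.range (j + 1), (c * t) ^ i / (i.factorial : ℝ) := by
            refine Finset.single_le_sum (f := fun i => (c * t) ^ i / (i.factorial : ℝ))
              (fun i _ => by positivity) (Finset.self_mem_range_succ j)
        _ ≤ Real.exp (c * t) := Real.sum_le_exp_of_nonneg (by positivity) _
    have hcj : (0:ℝ) < c ^ j := by positivity
    have hfj : (0:ℝ) < (j.factorial : ℝ) := by positivity
    rw [mul_pow, div_le_iff₀ hfj] at h1
    rw [div_mul_eq_mul_div, le_div_iff₀ hcj]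
    nlinarith
  set K := ⌈γ⌉₊ with hK
  have hbase : ∀ t : ℝ, 0 ≤ t → t ^ γ ≤ 1 + t ^ K := by
    intro t ht
    rcases le_or_gt t 1 with h | h
    · have h1 : t ^ γ ≤ 1 := Real.rpow_le_one ht h hγ
      have h2 : (0:ℝ) ≤ t ^ K := by positivity
      linarith
    · have h1 : t ^ γ ≤ t ^ (K : ℝ) :=
        Real.rpow_le_rpow_of_exponent_le h.le (Nat.le_ceil γ)
      rw [Real.rpow_natCast] at h1
      linarith [h1]
  refine ⟨4 + 4 * ((K.factorial : ℝ) / c ^ K) + ((2*K).factorial : ℝ) / c ^ (2*K),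
    by positivity, fun t ht => ?_⟩
  have h0 : (0:ℝ) ≤ t ^ γ := Real.rpow_nonneg ht γ
  have hKt : (0:ℝ) ≤ t ^ K := by positivity
  have h2 : (1 + t ^ γ) ^ 2 ≤ (2 + t ^ K) ^ 2 := by
    have := hbase t ht
    nlinarith
  have h3 : (2 + t ^ K) ^ 2 = 4 + 4 * t ^ K + t ^ (2 * K) := by rw [pow_mul]; ring
  have h4 := key K t ht
  have h5 := key (2*K) t ht
  have hexp : (1:ℝ) ≤ Real.exp (c * t) := by
    rw [show (1:ℝ) = Real.exp 0 from (Real.exp_zero).symm]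
    exact Real.exp_le_exp.mpr (by positivity)
  nlinarith [Real.exp_pos (c * t), mul_nonneg (le_of_lt (by positivity : (0:ℝ) < (K.factorial : ℝ) / c ^ K)) (Real.exp_pos (c*t)).le]

set_option maxHeartbeats 1600000

/-- Almost-sure uniform convergence of the empirical LRM loss.
Under the standing assumptions (i.i.d. data from an admissible `q0`, admissible model
family, admissible Laplace-smoothed estimator), Assumption A2, Assumption A3 and
Assumption A4 with `r = 1`, `sup_{θ∈Θ} |L̂_n(θ) − L(θ)| → 0` almost surely. -/
theorem lrm_loss_uniform_convergence
    {𝒳 : Type*} [Countable 𝒳] [DecidableEq 𝒳] [MeasurableSpace 𝒳] [MeasurableSingletonClass 𝒳]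
    {Ω : Type*} [MeasurableSpace Ω] (μ : Measure Ω) [IsProbabilityMeasure μ]
    {d : ℕ} (Θ : Set (Fin d → ℝ))
    -- q0 is a PMF on 𝒳
    (q0 : 𝒳 → ℝ) (hq0_nonneg : ∀ x, 0 ≤ q0 x) (hq0_sum : ∑' x, q0 x = 1)
    -- matching set with M(x) ⊆ supp(q0) and |M(x)| = m < ∞
    (M : 𝒳 → Finset 𝒳) (m : ℕ) (hm : 0 < m) (hM_card : ∀ x, (M x).card = m)
    (hM_supp : ∀ x, ∀ x' ∈ M x, 0 < q0 x')
    -- Standing Assumption (a): q0 ∈ Q^adm_{q0}(𝒳)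
    (hq0_adm : Summable fun x => q0 x * ∑ x' ∈ M x, (Real.log (q0 x' / q0 x)) ^ 2)
    -- the model family
    (pθ : (Fin d → ℝ) → 𝒳 → ℝ)
    -- Standing Assumption (b): every p_θ, θ ∈ Θ, lies in Q^adm_{q0}(𝒳)
    (hpθ_pos : ∀ θ ∈ Θ, ∀ x, 0 < q0 x → 0 < pθ θ x)
    (hpθ_supp : ∀ θ ∈ Θ, ∀ x, 0 < pθ θ x → 0 < q0 x)
    (hpθ_adm : ∀ θ ∈ Θ, Summable fun x => q0 x * ∑ x' ∈ M x, (Real.log (pθ θ x' / pθ θ x)) ^ 2)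
    -- i.i.d. observations from q0
    (X : ℕ → Ω → 𝒳)
    (hX_meas : ∀ i, Measurable (X i))
    (hX_dist : ∀ i x, μ (X i ⁻¹' {x}) = ENNReal.ofReal (q0 x))
    (hX_indep : iIndepFun X μ)
    -- the Laplace-smoothed estimator q̂_α with α > 0
    (α : ℝ) (hα : 0 < α)
    (qdag : 𝒳 → ℝ) (hqdag_nonneg : ∀ x, 0 ≤ qdag x) (hqdag_pos : ∀ x, 0 < q0 x → 0 < qdag x)
    (Zdag : ℝ) (hZdag : HasSum qdag Zdag)
    (qhat : ℕ → Ω → 𝒳 → ℝ)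
    (hqhat : ∀ n ω x, qhat n ω x =
      ((∑ i ∈ Finset.range n, if X i ω = x then (1 : ℝ) else 0) + α * qdag x)
        / ((n : ℝ) + α * Zdag))
    -- Standing Assumption (c): q̂_α ∈ Q^adm_{q0}(𝒳) almost surely
    (hqhat_adm : ∀ n, ∀ᵐ ω ∂μ,
      Summable fun x => q0 x * ∑ x' ∈ M x, (Real.log (qhat n ω x' / qhat n ω x)) ^ 2)
    -- Assumption A2: either 𝒳 is finite, or 𝒳 is countably infinite, q0 is subexponential,
    -- and the log-ratios of q0 and q̂_α grow at most polynomially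
    (nrmX : 𝒳 → ℝ) (hnrmX : ∀ x, 0 ≤ nrmX x)
    (hA2 : Finite 𝒳 ∨
      (Infinite 𝒳 ∧ (∃ c > (0 : ℝ), Summable fun x => q0 x * Real.exp (c * nrmX x)) ∧
        ∃ Kq0 > (0 : ℝ), ∃ γ > (1 : ℝ), ∃ Khat : ℕ → ℝ,
          (∀ n, 0 ≤ Khat n) ∧ IsBoundedUnder (· ≤ ·) atTop Khat ∧
          (∀ x, ∀ x' ∈ M x, |Real.log (q0 x' / q0 x)| ≤ Kq0 * (1 + nrmX x ^ γ)) ∧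
          (∀ n ω x, ∀ x' ∈ M x,
            |Real.log (qhat n ω x' / qhat n ω x)| ≤ Khat n * (1 + nrmX x ^ γ))))
    -- the population and empirical LRM losses
    (Lpop : (Fin d → ℝ) → ℝ)
    (hLpop : ∀ θ, Lpop θ = ∑' x, q0 x * ((1 / ((M x).card : ℝ)) *
      ∑ x' ∈ M x, ((Real.log (pθ θ x' / pθ θ x)) ^ 2
        - 2 * Real.log (pθ θ x' / pθ θ x) * Real.log (q0 x' / q0 x))))
    (Lhat : ℕ → Ω → (Fin d → ℝ) → ℝ)
    (hLhat : ∀ n ω θ, Lhat n ω θ = (1 / (n : ℝ)) * ∑ i ∈ Finset.range n,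
      ((1 / ((M (X i ω)).card : ℝ)) * ∑ x' ∈ M (X i ω),
        ((Real.log (pθ θ x' / pθ θ (X i ω))) ^ 2
          - 2 * Real.log (pθ θ x' / pθ θ (X i ω))
              * Real.log (qhat n ω x' / qhat n ω (X i ω)))))
    -- Assumption A3: Θ is open, convex and bounded, and empirical minimisers
    -- eventually exist almost surely
    (hΘ_open : IsOpen Θ) (hΘ_convex : Convex ℝ Θ) (hΘ_bounded : Bornology.IsBounded Θ)
    (hA3_min : ∀ᵐ ω ∂μ, ∀ᶠ n in atTop, ∃ θ ∈ Θ, IsMinOn (Lhat n ω) Θ θ)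
    -- Assumption A4 with r = 0: smoothness of the model and an L²(q0) envelope for the
    -- log-ratios (derivatives of order 0 and 1)
    (hA4_smooth : ∀ x, ContDiffOn ℝ 3 (fun θ => pθ θ x) Θ)
    (K : ℕ → 𝒳 → ℝ)
    (hK_L2 : ∀ ρ ≤ 1, Summable fun x => q0 x * (K ρ x) ^ 2)
    (hA4_bound : ∀ ρ ≤ 1, ∀ x, ∀ x' ∈ M x, ∀ θ ∈ Θ,
      ‖iteratedFDerivWithin ℝ ρ (fun t => Real.log (pθ t x' / pθ t x)) Θ θ‖ ≤ K ρ x) :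
    -- conclusion: almost-sure uniform convergence of the empirical loss over Θ
    ∀ᵐ ω ∂μ, ∀ ε > (0 : ℝ), ∃ N : ℕ, ∀ n ≥ N, ∀ θ ∈ Θ, |Lhat n ω θ - Lpop θ| ≤ ε := by
  classical
  -- Θ is nonempty
  have hμne : (MeasureTheory.ae μ).NeBot := ae_neBot.mpr (IsProbabilityMeasure.ne_zero μ)
  obtain ⟨θ0, hθ0⟩ : ∃ θ0, θ0 ∈ Θ := by
    obtain ⟨ω, hω⟩ := hA3_min.exists
    obtain ⟨n, θ0, hθ0, -⟩ := hω.exists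
    exact ⟨θ0, hθ0⟩
  have hm' : (0:ℝ) < (m:ℝ) := by exact_mod_cast hm
  have hm0 : (m:ℝ) ≠ 0 := ne_of_gt hm'
  -- support is nonempty, Zdag > 0
  obtain ⟨x0, hx0⟩ : ∃ x0, 0 < q0 x0 := by
    by_contra h
    push_neg at h
    have hz : ∀ x, q0 x = 0 := fun x => le_antisymm (h x) (hq0_nonneg x)
    rw [tsum_congr hz, tsum_zero] at hq0_sum
    norm_num at hq0_sum
  have hZpos : 0 < Zdag :=
    lt_of_lt_of_le (hqdag_pos x0 hx0) (le_hasSum hZdag x0 (fun b _ => hqdag_nonneg b))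
  -- nonemptiness of matching sets, nonnegativity of envelopes
  have hMne : ∀ x, ∃ x', x' ∈ M x := by
    intro x
    have : 0 < (M x).card := by rw [hM_card]; exact hm
    obtain ⟨x', hx'⟩ := Finset.card_pos.mp this
    exact ⟨x', hx'⟩
  have hKnn : ∀ ρ ≤ 1, ∀ x, 0 ≤ K ρ x := by
    intro ρ hρ x
    obtain ⟨x', hx'⟩ := hMne x
    exact le_trans (norm_nonneg _) (hA4_bound ρ hρ x x' hx' θ0 hθ0)
  have hK0 : ∀ x, 0 ≤ K 0 x := hKnn 0 (by norm_num)
  have hK1 : ∀ x, 0 ≤ K 1 x := hKnn 1 le_rfl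
  -- pointwise bound on the log-ratios
  have hℓK0 : ∀ θ ∈ Θ, ∀ x, ∀ x' ∈ M x, |Real.log (pθ θ x' / pθ θ x)| ≤ K 0 x := by
    intro θ hθ x x' hx'
    have h := hA4_bound 0 (by norm_num) x x' hx' θ hθ
    rwa [norm_iteratedFDerivWithin_zero, Real.norm_eq_abs] at h
  -- Lipschitz bound on the log-ratios
  have hℓlip : ∀ x, 0 < q0 x → ∀ x' ∈ M x, ∀ θ ∈ Θ, ∀ θ' ∈ Θ,
      |Real.log (pθ θ' x' / pθ θ' x) - Real.log (pθ θ x' / pθ θ x)| ≤ K 1 x * ‖θ' - θ‖ := by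
    intro x hx x' hx' θ hθ θ' hθ'
    have hdiff : DifferentiableOn ℝ (fun t => Real.log (pθ t x' / pθ t x)) Θ := by
      have h1 : DifferentiableOn ℝ (fun t => pθ t x') Θ :=
        (hA4_smooth x').differentiableOn (by norm_num)
      have h2 : DifferentiableOn ℝ (fun t => pθ t x) Θ :=
        (hA4_smooth x).differentiableOn (by norm_num)
      have h3 : DifferentiableOn ℝ (fun t => Real.log (pθ t x') - Real.log (pθ t x)) Θ :=
        (h1.log (fun t ht => (hpθ_pos t ht x' (hM_supp x x' hx')).ne')).sub
          (h2.log (fun t ht => (hpθ_pos t ht x hx).ne'))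
      refine h3.congr (fun t ht => ?_)
      rw [Real.log_div (hpθ_pos t ht x' (hM_supp x x' hx')).ne' (hpθ_pos t ht x hx).ne']
    have hbd : ∀ t ∈ Θ, ‖fderivWithin ℝ (fun t => Real.log (pθ t x' / pθ t x)) Θ t‖ ≤ K 1 x := by
      intro t ht
      have h := hA4_bound 1 le_rfl x x' hx' t ht
      have heq : ‖fderivWithin ℝ (fun t => Real.log (pθ t x' / pθ t x)) Θ t‖
          = ‖iteratedFDerivWithin ℝ (0+1) (fun t => Real.log (pθ t x' / pθ t x)) Θ t‖ := by
        rw [← norm_iteratedFDerivWithin_fderivWithin (n := 0) hΘ_open.uniqueDiffOn ht,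
          norm_iteratedFDerivWithin_zero]
      exact le_trans (le_of_eq heq) h
    have h := hΘ_convex.norm_image_sub_le_of_norm_fderivWithin_le hdiff hbd hθ hθ'
    simpa [Real.norm_eq_abs] using h
  -- abbreviations
  set f : (Fin d → ℝ) → 𝒳 → ℝ := fun θ x => (1/(m:ℝ)) * ∑ x' ∈ M x,
    ((Real.log (pθ θ x' / pθ θ x))^2
      - 2 * Real.log (pθ θ x' / pθ θ x) * Real.log (q0 x' / q0 x)) with hfdef
  set G : 𝒳 → ℝ := fun x => ∑ x' ∈ M x, |Real.log (q0 x' / q0 x)| with hGdef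
  set B : 𝒳 → ℝ := fun x => K 0 x ^ 2 + (2 * K 0 x / m) * G x with hBdef
  set Lip : 𝒳 → ℝ := fun x => 2 * K 0 x * K 1 x + (2 * K 1 x / m) * G x with hLipdef
  set D : ℕ → Ω → 𝒳 → ℝ := fun n ω x => ∑ x' ∈ M x,
    |Real.log (qhat n ω x' / qhat n ω x) - Real.log (q0 x' / q0 x)| with hDdef
  have hGnn : ∀ x, 0 ≤ G x := fun x => Finset.sum_nonneg (fun x' _ => abs_nonneg _)
  have hDnn : ∀ n ω x, 0 ≤ D n ω x := fun n ω x => Finset.sum_nonneg (fun x' _ => abs_nonneg _)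
  have hLipnn : ∀ x, 0 ≤ Lip x := fun x => by
    have := hK0 x; have := hK1 x; have := hGnn x; positivity
  -- envelope and Lipschitz property of f
  have hfB : ∀ θ ∈ Θ, ∀ x, |f θ x| ≤ B x := by
    intro θ hθ x
    have hstep : |f θ x| ≤ (1/(m:ℝ)) * ∑ x' ∈ M x,
        (K 0 x ^ 2 + 2 * K 0 x * |Real.log (q0 x' / q0 x)|) := by
      rw [hfdef]
      dsimp only
      rw [abs_mul, abs_of_nonneg (by positivity : (0:ℝ) ≤ 1/(m:ℝ))]
      refine mul_le_mul_of_nonneg_left ?_ (by positivity)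
      refine le_trans (Finset.abs_sum_le_sum_abs _ _) (Finset.sum_le_sum fun x' hx' => ?_)
      have h1 := hℓK0 θ hθ x x' hx'
      have h2 := abs_nonneg (Real.log (q0 x' / q0 x))
      have h3 := abs_nonneg (Real.log (pθ θ x' / pθ θ x))
      have key : |Real.log (pθ θ x' / pθ θ x) ^ 2
          - 2 * Real.log (pθ θ x' / pθ θ x) * Real.log (q0 x' / q0 x)|
          ≤ |Real.log (pθ θ x' / pθ θ x)| ^ 2
            + 2 * (|Real.log (pθ θ x' / pθ θ x)| * |Real.log (q0 x' / q0 x)|) := by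
        calc |Real.log (pθ θ x' / pθ θ x) ^ 2
            - 2 * Real.log (pθ θ x' / pθ θ x) * Real.log (q0 x' / q0 x)|
            ≤ |Real.log (pθ θ x' / pθ θ x) ^ 2|
              + |2 * Real.log (pθ θ x' / pθ θ x) * Real.log (q0 x' / q0 x)| := abs_sub _ _
          _ = |Real.log (pθ θ x' / pθ θ x)| ^ 2
              + 2 * (|Real.log (pθ θ x' / pθ θ x)| * |Real.log (q0 x' / q0 x)|) := by
            rw [abs_pow, abs_mul, abs_mul, abs_two]; ring
      refine le_trans key ?_
      nlinarith
    refine le_trans hstep (le_of_eq ?_)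
    rw [Finset.sum_add_distrib, Finset.sum_const, hM_card, ← Finset.mul_sum, hBdef, hGdef]
    dsimp only
    field_simp
    ring
  have hflip : ∀ x, 0 < q0 x → ∀ θ ∈ Θ, ∀ θ' ∈ Θ, |f θ' x - f θ x| ≤ Lip x * ‖θ' - θ‖ := by
    intro x hx θ hθ θ' hθ'
    have hstep : |f θ' x - f θ x| ≤ (1/(m:ℝ)) * ∑ x' ∈ M x,
        (2 * K 0 x * (K 1 x * ‖θ' - θ‖) + 2 * |Real.log (q0 x' / q0 x)| * (K 1 x * ‖θ' - θ‖)) := by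
      rw [hfdef]
      dsimp only
      rw [← mul_sub, ← Finset.sum_sub_distrib, abs_mul,
        abs_of_nonneg (by positivity : (0:ℝ) ≤ 1/(m:ℝ))]
      refine mul_le_mul_of_nonneg_left ?_ (by positivity)
      refine le_trans (Finset.abs_sum_le_sum_abs _ _) (Finset.sum_le_sum fun x' hx' => ?_)
      set a := Real.log (pθ θ x' / pθ θ x) with ha
      set a' := Real.log (pθ θ' x' / pθ θ' x) with ha'
      set g := Real.log (q0 x' / q0 x) with hg
      have h1 : |a' - a| ≤ K 1 x * ‖θ' - θ‖ := hℓlip x hx x' hx' θ hθ θ' hθ'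
      have h2 : |a| ≤ K 0 x := hℓK0 θ hθ x x' hx'
      have h3 : |a'| ≤ K 0 x := hℓK0 θ' hθ' x x' hx'
      have e1 : a' ^ 2 - 2 * a' * g - (a ^ 2 - 2 * a * g)
          = (a' + a) * (a' - a) - 2 * g * (a' - a) := by ring
      rw [e1]
      calc |(a' + a) * (a' - a) - 2 * g * (a' - a)|
          ≤ |(a' + a) * (a' - a)| + |2 * g * (a' - a)| := abs_sub _ _
        _ = |a' + a| * |a' - a| + 2 * |g| * |a' - a| := by
            rw [abs_mul, abs_mul, abs_mul, abs_two]
        _ ≤ (2 * K 0 x) * (K 1 x * ‖θ' - θ‖) + 2 * |g| * (K 1 x * ‖θ' - θ‖) := by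
            have h4 : |a' + a| ≤ 2 * K 0 x := by
              calc |a' + a| ≤ |a'| + |a| := abs_add_le _ _
                _ ≤ 2 * K 0 x := by linarith
            refine add_le_add (mul_le_mul h4 h1 (abs_nonneg _) (by have := hK0 x; linarith)) ?_
            exact mul_le_mul_of_nonneg_left h1 (by positivity)
        _ = 2 * K 0 x * (K 1 x * ‖θ' - θ‖) + 2 * |g| * (K 1 x * ‖θ' - θ‖) := by ring
    refine le_trans hstep (le_of_eq ?_)
    rw [Finset.sum_add_distrib, Finset.sum_const, hM_card]
    have e2 : ∑ x' ∈ M x, 2 * |Real.log (q0 x' / q0 x)| * (K 1 x * ‖θ' - θ‖)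
        = 2 * (K 1 x * ‖θ' - θ‖) * G x := by
      rw [hGdef]
      dsimp only
      rw [Finset.mul_sum]
      exact Finset.sum_congr rfl fun x' _ => by ring
    rw [e2, hLipdef]
    dsimp only
    field_simp
    ring
  -- summability facts
  have hGsq : Summable fun x => q0 x * G x ^ 2 := by
    refine Summable.of_nonneg_of_le (fun x => mul_nonneg (hq0_nonneg x) (sq_nonneg _))
      (fun x => ?_) (hq0_adm.mul_left (m:ℝ))
    have h1 : G x ^ 2 ≤ (m:ℝ) * ∑ x' ∈ M x, (Real.log (q0 x' / q0 x)) ^ 2 := by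
      have h := sq_sum_le_card_mul_sum_sq
        (s := M x) (f := fun x' => |Real.log (q0 x' / q0 x)|)
      rw [hM_card] at h
      rw [hGdef]
      dsimp only
      refine le_trans h (le_of_eq ?_)
      congr 1
      exact Finset.sum_congr rfl fun x' _ => sq_abs _
    calc q0 x * G x ^ 2 ≤ q0 x * ((m:ℝ) * ∑ x' ∈ M x, (Real.log (q0 x' / q0 x)) ^ 2) :=
          mul_le_mul_of_nonneg_left h1 (hq0_nonneg x)
      _ = (m:ℝ) * (q0 x * ∑ x' ∈ M x, (Real.log (q0 x' / q0 x)) ^ 2) := by ring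
  have hBsum : Summable fun x => q0 x * B x := by
    have h1 : Summable fun x => q0 x * (K 0 x * G x) :=
      summable_mul_of_sq hq0_nonneg hK0 hGnn (hK_L2 0 (by norm_num)) hGsq
    have h2 := (hK_L2 0 (by norm_num)).add (h1.mul_left (2/(m:ℝ)))
    refine h2.congr fun x => ?_
    rw [hBdef]
    dsimp only
    field_simp [hm0]
  have hLipsum : Summable fun x => q0 x * Lip x := by
    have h1 : Summable fun x => q0 x * (K 0 x * K 1 x) :=
      summable_mul_of_sq hq0_nonneg hK0 hK1 (hK_L2 0 (by norm_num)) (hK_L2 1 le_rfl)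
    have h2 : Summable fun x => q0 x * (K 1 x * G x) :=
      summable_mul_of_sq hq0_nonneg hK1 hGnn (hK_L2 1 le_rfl) hGsq
    have h3 := (h1.mul_left (2:ℝ)).add (h2.mul_left (2/(m:ℝ)))
    refine h3.congr fun x => ?_
    rw [hLipdef]
    dsimp only
    field_simp [hm0]
  have hq0summ : Summable q0 := by
    by_contra h
    rw [tsum_eq_zero_of_not_summable h] at hq0_sum
    norm_num at hq0_sum
  have hK0abs : Summable fun x => q0 x * |K 0 x| := by
    have h1 : Summable fun x => q0 x * (K 0 x * 1) := by
      refine summable_mul_of_sq hq0_nonneg hK0 (fun _ => zero_le_one) (hK_L2 0 (by norm_num)) ?_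
      exact hq0summ.congr fun x => by ring
    refine h1.congr fun x => by rw [abs_of_nonneg (hK0 x)]; ring
  set TLip : ℝ := ∑' x, q0 x * Lip x with hTLipdef
  have hTLipnn : 0 ≤ TLip :=
    tsum_nonneg (fun x => mul_nonneg (hq0_nonneg x) (hLipnn x))
  set EK0 : ℝ := ∑' x, q0 x * K 0 x with hEK0def
  -- Lpop in terms of f
  have hLpop' : ∀ θ, Lpop θ = ∑' x, q0 x * f θ x := by
    intro θ
    rw [hLpop θ]
    exact tsum_congr fun x => by rw [hfdef]; simp only [hM_card]
  have hfsum : ∀ θ ∈ Θ, Summable fun x => q0 x * f θ x := by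
    intro θ hθ
    refine Summable.of_norm_bounded hBsum (fun x => ?_)
    rw [Real.norm_eq_abs, abs_mul, abs_of_nonneg (hq0_nonneg x)]
    exact mul_le_mul_of_nonneg_left (hfB θ hθ x) (hq0_nonneg x)
  -- Lipschitz property of Lpop
  have hLpopLip : ∀ θ ∈ Θ, ∀ θ' ∈ Θ, |Lpop θ' - Lpop θ| ≤ TLip * ‖θ' - θ‖ := by
    intro θ hθ θ' hθ'
    rw [hLpop' θ, hLpop' θ', ← Summable.tsum_sub (hfsum θ' hθ') (hfsum θ hθ)]
    have hbd : ∀ x, |q0 x * f θ' x - q0 x * f θ x| ≤ q0 x * Lip x * ‖θ' - θ‖ := by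
      intro x
      rcases (hq0_nonneg x).eq_or_lt with h0 | h0
      · rw [← h0]; simp
      · rw [← mul_sub, abs_mul, abs_of_nonneg (hq0_nonneg x), mul_assoc]
        exact mul_le_mul_of_nonneg_left (hflip x h0 θ hθ θ' hθ') (hq0_nonneg x)
    have hsub : Summable fun x => q0 x * f θ' x - q0 x * f θ x :=
      (hfsum θ' hθ').sub (hfsum θ hθ)
    calc |∑' x, (q0 x * f θ' x - q0 x * f θ x)|
        ≤ ∑' x, |q0 x * f θ' x - q0 x * f θ x| := by
          have h := norm_tsum_le_tsum_norm (f := fun x => q0 x * f θ' x - q0 x * f θ x)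
            (hsub.abs.congr fun x => (Real.norm_eq_abs _).symm)
          simpa [Real.norm_eq_abs] using h
      _ ≤ ∑' x, q0 x * Lip x * ‖θ' - θ‖ := by
          exact Summable.tsum_le_tsum hbd hsub.abs (hLipsum.mul_right ‖θ' - θ‖)
      _ = TLip * ‖θ' - θ‖ := by
          rw [hTLipdef, ← tsum_mul_right]
  -- the deterministic decomposition
  have hdecomp : ∀ n ω, ∀ θ ∈ Θ,
      |Lhat n ω θ - (∑ i ∈ Finset.range n, f θ (X i ω)) / n|
        ≤ (2/(m:ℝ)) * ((∑ i ∈ Finset.range n, K 0 (X i ω) * D n ω (X i ω)) / n) := by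
    intro n ω θ hθ
    have hptw : ∀ i, |(1 / ((M (X i ω)).card : ℝ)) * (∑ x' ∈ M (X i ω),
        ((Real.log (pθ θ x' / pθ θ (X i ω))) ^ 2
          - 2 * Real.log (pθ θ x' / pθ θ (X i ω))
              * Real.log (qhat n ω x' / qhat n ω (X i ω)))) - f θ (X i ω)|
        ≤ (2/(m:ℝ)) * (K 0 (X i ω) * D n ω (X i ω)) := by
      intro i
      set x := X i ω with hx
      have hkey : (1 / ((M x).card : ℝ)) * (∑ x' ∈ M x,
          ((Real.log (pθ θ x' / pθ θ x)) ^ 2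
            - 2 * Real.log (pθ θ x' / pθ θ x) * Real.log (qhat n ω x' / qhat n ω x)))
          - f θ x
          = (1/(m:ℝ)) * ∑ x' ∈ M x, (2 * Real.log (pθ θ x' / pθ θ x)
              * (Real.log (q0 x' / q0 x) - Real.log (qhat n ω x' / qhat n ω x))) := by
        rw [hfdef, hM_card]
        dsimp only
        rw [← mul_sub, ← Finset.sum_sub_distrib]
        congr 1
        exact Finset.sum_congr rfl fun x' _ => by ring
      rw [hkey, abs_mul, abs_of_nonneg (by positivity : (0:ℝ) ≤ 1/(m:ℝ))]
      have hsum2 : |∑ x' ∈ M x, (2 * Real.log (pθ θ x' / pθ θ x)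
          * (Real.log (q0 x' / q0 x) - Real.log (qhat n ω x' / qhat n ω x)))|
          ≤ 2 * K 0 x * D n ω x := by
        refine le_trans (Finset.abs_sum_le_sum_abs _ _) ?_
        rw [hDdef]
        dsimp only
        rw [Finset.mul_sum]
        refine Finset.sum_le_sum fun x' hx' => ?_
        rw [abs_mul, abs_mul, abs_two]
        have h1 := hℓK0 θ hθ x x' hx'
        have h2 : |Real.log (q0 x' / q0 x) - Real.log (qhat n ω x' / qhat n ω x)|
            = |Real.log (qhat n ω x' / qhat n ω x) - Real.log (q0 x' / q0 x)| := abs_sub_comm _ _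
        rw [h2]
        have h3 := abs_nonneg (Real.log (qhat n ω x' / qhat n ω x) - Real.log (q0 x' / q0 x))
        nlinarith [abs_nonneg (Real.log (pθ θ x' / pθ θ x))]
      calc (1/(m:ℝ)) * |∑ x' ∈ M x, (2 * Real.log (pθ θ x' / pθ θ x)
          * (Real.log (q0 x' / q0 x) - Real.log (qhat n ω x' / qhat n ω x)))|
          ≤ (1/(m:ℝ)) * (2 * K 0 x * D n ω x) :=
            mul_le_mul_of_nonneg_left hsum2 (by positivity)
        _ = (2/(m:ℝ)) * (K 0 x * D n ω x) := by ring
    rw [hLhat n ω θ]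
    have hre : (1/(n:ℝ)) * (∑ i ∈ Finset.range n,
        ((1 / ((M (X i ω)).card : ℝ)) * ∑ x' ∈ M (X i ω),
          ((Real.log (pθ θ x' / pθ θ (X i ω))) ^ 2
            - 2 * Real.log (pθ θ x' / pθ θ (X i ω))
                * Real.log (qhat n ω x' / qhat n ω (X i ω)))))
        - (∑ i ∈ Finset.range n, f θ (X i ω)) / n
        = (∑ i ∈ Finset.range n, ((1 / ((M (X i ω)).card : ℝ)) * (∑ x' ∈ M (X i ω),
            ((Real.log (pθ θ x' / pθ θ (X i ω))) ^ 2
              - 2 * Real.log (pθ θ x' / pθ θ (X i ω))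
                  * Real.log (qhat n ω x' / qhat n ω (X i ω)))) - f θ (X i ω))) / n := by
      rw [Finset.sum_sub_distrib, sub_div, one_div, inv_mul_eq_div]
    rw [hre, abs_div, Nat.abs_cast]
    calc |∑ i ∈ Finset.range n, ((1 / ((M (X i ω)).card : ℝ)) * (∑ x' ∈ M (X i ω),
          ((Real.log (pθ θ x' / pθ θ (X i ω))) ^ 2
            - 2 * Real.log (pθ θ x' / pθ θ (X i ω))
                * Real.log (qhat n ω x' / qhat n ω (X i ω)))) - f θ (X i ω))| / n
        ≤ (∑ i ∈ Finset.range n, (2/(m:ℝ)) * (K 0 (X i ω) * D n ω (X i ω))) / n := by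
          refine div_le_div_of_nonneg_right ?_ (Nat.cast_nonneg n)
          exact le_trans (Finset.abs_sum_le_sum_abs _ _) (Finset.sum_le_sum fun i _ => hptw i)
      _ = (2/(m:ℝ)) * ((∑ i ∈ Finset.range n, K 0 (X i ω) * D n ω (X i ω)) / n) := by
          rw [← Finset.mul_sum, mul_div_assoc]
  -- the coverings of Θ
  have hcov : ∀ k : ℕ, ∃ t : Set (Fin d → ℝ), t ⊆ Θ ∧ t.Finite ∧
      Θ ⊆ ⋃ y ∈ t, {x | dist x y < 1/((k:ℝ)+1)} := by
    intro k
    have htb : TotallyBounded Θ :=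
      (hΘ_bounded.isCompact_closure).totallyBounded.subset subset_closure
    obtain ⟨t, ht1, ht2, ht3⟩ := totallyBounded_iff_subset.mp htb
      {p : (Fin d → ℝ) × (Fin d → ℝ) | dist p.1 p.2 < 1/((k:ℝ)+1)}
      (Metric.dist_mem_uniformity (by positivity))
    exact ⟨t, ht1, ht2, ht3⟩
  choose tk htk1 htk2 htk3 using hcov
  -- almost sure events
  have hES : ∀ᵐ ω ∂μ, ∀ i, 0 < q0 (X i ω) := by
    rw [ae_all_iff]
    intro i
    have hnull : μ (X i ⁻¹' {x | ¬ 0 < q0 x}) = 0 := by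
      rw [measure_preimage_eq_zero_iff_of_countable (Set.to_countable _)]
      intro x hx
      rw [hX_dist i x]
      have h0 : q0 x = 0 := le_antisymm (not_lt.mp hx) (hq0_nonneg x)
      simp [h0]
    rw [ae_iff]
    exact hnull
  have hEcnt : ∀ᵐ ω ∂μ, ∀ x : 𝒳, Tendsto
      (fun n : ℕ => (∑ i ∈ Finset.range n, (if X i ω = x then (1:ℝ) else 0))/n)
      atTop (𝓝 (q0 x)) := by
    rw [ae_all_iff]
    intro x
    have hsum : Summable (fun y => q0 y * |(if y = x then (1:ℝ) else 0)|) := by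
      refine summable_of_ne_finset_zero (s := {x}) (fun b hb => ?_)
      rw [Finset.mem_singleton] at hb
      simp [hb]
    have h := slln_aux μ q0 hq0_nonneg X hX_meas hX_dist hX_indep
      (fun y => if y = x then (1:ℝ) else 0) hsum
    have he : (∑' y, q0 y * (if y = x then (1:ℝ) else 0)) = q0 x := by
      rw [tsum_eq_single x (fun b hb => by simp [hb])]
      simp
    rw [he] at h
    exact h
  have hEK0avg : ∀ᵐ ω ∂μ, Tendsto
      (fun n : ℕ => (∑ i ∈ Finset.range n, K 0 (X i ω))/n) atTop (𝓝 EK0) := by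
    exact slln_aux μ q0 hq0_nonneg X hX_meas hX_dist hX_indep (K 0) hK0abs
  have hELip : ∀ᵐ ω ∂μ, Tendsto
      (fun n : ℕ => (∑ i ∈ Finset.range n, Lip (X i ω))/n) atTop (𝓝 TLip) := by
    refine slln_aux μ q0 hq0_nonneg X hX_meas hX_dist hX_indep Lip ?_
    exact hLipsum.congr fun x => by rw [abs_of_nonneg (hLipnn x)]
  have hEf : ∀ᵐ ω ∂μ, ∀ k : ℕ, ∀ θc ∈ tk k, Tendsto
      (fun n : ℕ => (∑ i ∈ Finset.range n, f θc (X i ω))/n) atTop (𝓝 (Lpop θc)) := by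
    rw [ae_all_iff]
    intro k
    rw [ae_ball_iff ((htk2 k).countable)]
    intro θc hθc
    have hθcΘ : θc ∈ Θ := htk1 k hθc
    have hsum : Summable (fun x => q0 x * |f θc x|) := by
      refine Summable.of_nonneg_of_le
        (fun x => mul_nonneg (hq0_nonneg x) (abs_nonneg _)) (fun x => ?_) hBsum
      exact mul_le_mul_of_nonneg_left (hfB θc hθcΘ x) (hq0_nonneg x)
    have h := slln_aux μ q0 hq0_nonneg X hX_meas hX_dist hX_indep (f θc) hsum
    rw [← hLpop' θc] at h
    exact h
  -- deterministic consequences of the counting limits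
  have hqlim_det : ∀ ω, (∀ x : 𝒳, Tendsto
      (fun n : ℕ => (∑ i ∈ Finset.range n, (if X i ω = x then (1:ℝ) else 0))/n)
      atTop (𝓝 (q0 x))) → ∀ x, Tendsto (fun n => qhat n ω x) atTop (𝓝 (q0 x)) := by
    intro ω hcnt x
    have h1 := hcnt x
    have h2 : Tendsto (fun n : ℕ => (α * qdag x)/n) atTop (𝓝 0) :=
      tendsto_const_div_atTop_nhds_zero_nat _
    have h3 : Tendsto (fun n : ℕ => (α * Zdag)/n) atTop (𝓝 0) :=
      tendsto_const_div_atTop_nhds_zero_nat _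
    have h4 := Tendsto.div (h1.add h2) (tendsto_const_nhds.add h3)
      (by norm_num : (1:ℝ) + 0 ≠ 0)
    have h5 : (q0 x + 0)/((1:ℝ)+0) = q0 x := by norm_num
    rw [h5] at h4
    refine h4.congr' ?_
    filter_upwards [eventually_gt_atTop 0] with n hn
    have hn' : (0:ℝ) < n := by exact_mod_cast hn
    have hden : (0:ℝ) < (n:ℝ) + α * Zdag := by positivity
    rw [hqhat n ω x]
    simp only [Pi.div_apply]
    field_simp
  have hDlim_det : ∀ ω, (∀ x, Tendsto (fun n => qhat n ω x) atTop (𝓝 (q0 x))) →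
      ∀ x, 0 < q0 x → Tendsto (fun n => D n ω x) atTop (𝓝 0) := by
    intro ω hql x hx
    have hterm : ∀ x' ∈ M x, Tendsto
        (fun n => |Real.log (qhat n ω x' / qhat n ω x) - Real.log (q0 x' / q0 x)|)
        atTop (𝓝 0) := by
      intro x' hx'
      have hq' := hM_supp x x' hx'
      have hratio : Tendsto (fun n => qhat n ω x' / qhat n ω x) atTop (𝓝 (q0 x' / q0 x)) :=
        (hql x').div (hql x) hx.ne'
      have hlog : Tendsto (fun n => Real.log (qhat n ω x' / qhat n ω x)) atTop
          (𝓝 (Real.log (q0 x' / q0 x))) :=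
        ((Real.continuousAt_log (div_pos hq' hx).ne').tendsto.comp hratio)
      have h := (hlog.sub (tendsto_const_nhds (x := Real.log (q0 x' / q0 x)))).abs
      simpa using h
    have h := tendsto_finset_sum (M x) (fun x' hx' => hterm x' hx')
    rw [hDdef]
    simpa using h
  -- Part II: the estimation error term vanishes
  have PII : ∀ᵐ ω ∂μ, Tendsto
      (fun n : ℕ => (∑ i ∈ Finset.range n, K 0 (X i ω) * D n ω (X i ω)) / n)
      atTop (𝓝 0) := by
    rcases hA2 with hfin | ⟨hinf, ⟨c, hc, hsub⟩, Kq0, hKq0, γ, hγ, Khat,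
      hKhat0, hKhatBd, hgq0b, hghatb⟩
    · -- finite case
      haveI := Fintype.ofFinite 𝒳
      filter_upwards [hEcnt, hES, hEK0avg] with ω hcnt hS hK0a
      have hql := hqlim_det ω hcnt
      have hDl := hDlim_det ω hql
      set SF := Finset.univ.filter (fun x : 𝒳 => 0 < q0 x) with hSF
      have hDmax : Tendsto (fun n => ∑ x ∈ SF, D n ω x) atTop (𝓝 0) := by
        have h : Tendsto (fun n => ∑ x ∈ SF, D n ω x) atTop (𝓝 (∑ _x ∈ SF, (0:ℝ))) :=
          tendsto_finset_sum SF (fun x hx => hDl x (Finset.mem_filter.mp hx).2)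
        rwa [Finset.sum_const_zero] at h
      refine squeeze_zero (g := fun n : ℕ => (∑ x ∈ SF, D n ω x)
          * ((∑ i ∈ Finset.range n, K 0 (X i ω))/(n:ℝ)))
        (fun n => ?_) (fun n => ?_) ?_
      · exact div_nonneg (Finset.sum_nonneg fun i _ => mul_nonneg (hK0 _) (hDnn n ω _))
          (Nat.cast_nonneg n)
      · have hnum : ∑ i ∈ Finset.range n, K 0 (X i ω) * D n ω (X i ω)
            ≤ ∑ i ∈ Finset.range n, K 0 (X i ω) * (∑ x ∈ SF, D n ω x) := by
          refine Finset.sum_le_sum fun i _ => mul_le_mul_of_nonneg_left ?_ (hK0 _)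
          refine Finset.single_le_sum (fun x _ => hDnn n ω x) ?_
          exact Finset.mem_filter.mpr ⟨Finset.mem_univ _, hS i⟩
        calc (∑ i ∈ Finset.range n, K 0 (X i ω) * D n ω (X i ω)) / n
            ≤ (∑ i ∈ Finset.range n, K 0 (X i ω) * (∑ x ∈ SF, D n ω x)) / n :=
              div_le_div_of_nonneg_right hnum (Nat.cast_nonneg n)
          _ = (∑ x ∈ SF, D n ω x) * ((∑ i ∈ Finset.range n, K 0 (X i ω))/n) := by
              rw [← Finset.sum_mul, mul_comm, mul_div_assoc]
      · have h := hDmax.mul hK0a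
        rwa [zero_mul] at h
    · -- infinite case
      haveI := hinf
      obtain ⟨e, he⟩ := exists_surjective_nat 𝒳
      choose r hr using he
      set ψ : 𝒳 → ℝ := fun x => (m:ℝ) * (K 0 x * (1 + nrmX x ^ γ)) with hψdef
      have hrpnn : ∀ x, (0:ℝ) ≤ nrmX x ^ γ := fun x => Real.rpow_nonneg (hnrmX x) γ
      have hψnn : ∀ x, 0 ≤ ψ x := fun x => by
        have h1 := hK0 x; have h2 := hrpnn x
        rw [hψdef]; dsimp only; positivity
      have hpoly : Summable fun x => q0 x * (1 + nrmX x ^ γ)^2 := by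
        obtain ⟨C, hC, hCb⟩ := poly_le_exp_aux hc γ (by linarith)
        refine Summable.of_nonneg_of_le
          (fun x => mul_nonneg (hq0_nonneg x) (sq_nonneg _)) (fun x => ?_)
          (hsub.mul_left C)
        calc q0 x * (1 + nrmX x ^ γ)^2
            ≤ q0 x * (C * Real.exp (c * nrmX x)) :=
              mul_le_mul_of_nonneg_left (hCb (nrmX x) (hnrmX x)) (hq0_nonneg x)
          _ = C * (q0 x * Real.exp (c * nrmX x)) := by ring
      have hψsum : Summable fun x => q0 x * ψ x := by
        have h := (summable_mul_of_sq hq0_nonneg hK0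
          (fun x => by have := hrpnn x; positivity)
          (hK_L2 0 (by norm_num)) hpoly).mul_left (m:ℝ)
        refine h.congr fun x => ?_
        rw [hψdef]; dsimp only; ring
      set F : ℕ → Finset 𝒳 := fun j => (Finset.range j).image e with hFdef
      set φt : ℕ → 𝒳 → ℝ := fun j x => if x ∈ F j then 0 else ψ x with hφtdef
      have hφtnn : ∀ j x, 0 ≤ φt j x := by
        intro j x; rw [hφtdef]; dsimp only
        split
        · exact le_rfl
        · exact hψnn x
      have hφtle : ∀ j x, φt j x ≤ ψ x := by
        intro j x; rw [hφtdef]; dsimp only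
        split
        · exact hψnn x
        · exact le_rfl
      have hφtsum : ∀ j, Summable fun x => q0 x * φt j x :=
        fun j => Summable.of_nonneg_of_le
          (fun x => mul_nonneg (hq0_nonneg x) (hφtnn j x))
          (fun x => mul_le_mul_of_nonneg_left (hφtle j x) (hq0_nonneg x)) hψsum
      have hEφ : ∀ᵐ ω ∂μ, ∀ j : ℕ, Tendsto
          (fun n : ℕ => (∑ i ∈ Finset.range n, φt j (X i ω))/n) atTop
          (𝓝 (∑' x, q0 x * φt j x)) := by
        rw [ae_all_iff]
        intro j
        refine slln_aux μ q0 hq0_nonneg X hX_meas hX_dist hX_indep _ ?_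
        exact (hφtsum j).congr fun x => by rw [abs_of_nonneg (hφtnn j x)]
      have hτ : ∀ ε > (0:ℝ), ∃ j : ℕ, (∑' x, q0 x * φt j x) < ε := by
        intro ε hε
        have hT := hψsum.hasSum
        have hev : ∀ᶠ G : Finset 𝒳 in atTop,
            (∑' x, q0 x * ψ x) - ε < ∑ x ∈ G, q0 x * ψ x :=
          hT.eventually (eventually_gt_nhds (by linarith))
        obtain ⟨G0, hG0⟩ := hev.exists
        refine ⟨(G0.sup r) + 1, ?_⟩
        have hsub0 : G0 ⊆ F ((G0.sup r) + 1) := by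
          intro x hxG
          rw [hFdef]
          simp only [Finset.mem_image]
          exact ⟨r x, Finset.mem_range.mpr (Nat.lt_succ_of_le (Finset.le_sup hxG)), hr x⟩
        set j := (G0.sup r) + 1 with hj
        have hχ : Summable (fun x => if x ∈ F j then q0 x * ψ x else 0) :=
          summable_of_ne_finset_zero (s := F j) (fun b hb => if_neg hb)
        have heq : ∑' x, q0 x * φt j x
            = (∑' x, q0 x * ψ x) - ∑ x ∈ F j, q0 x * ψ x := by
          have hsplit : ∀ x, q0 x * φt j x
              = q0 x * ψ x - (if x ∈ F j then q0 x * ψ x else 0) := by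
            intro x; rw [hφtdef]; dsimp only
            split <;> simp
          rw [tsum_congr hsplit, Summable.tsum_sub hψsum hχ]
          congr 1
          rw [tsum_eq_sum (s := F j) (fun b hb => if_neg hb)]
          exact Finset.sum_congr rfl fun b hb => if_pos hb
        rw [heq]
        have hmono : ∑ x ∈ G0, q0 x * ψ x ≤ ∑ x ∈ F j, q0 x * ψ x :=
          Finset.sum_le_sum_of_subset_of_nonneg hsub0
            (fun x _ _ => mul_nonneg (hq0_nonneg x) (hψnn x))
        linarith
      obtain ⟨Kb, hKb⟩ := hKhatBd
      rw [eventually_map] at hKb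
      set CC := Kq0 + max Kb 0 with hCC
      have hCCpos : 0 < CC := by
        have h := le_max_right Kb (0:ℝ)
        rw [hCC]; linarith
      filter_upwards [hEcnt, hES, hEK0avg, hEφ] with ω hcnt hS hK0a hφa
      have hql := hqlim_det ω hcnt
      have hDl := hDlim_det ω hql
      have havgnn : ∀ n : ℕ, 0 ≤ (∑ i ∈ Finset.range n, K 0 (X i ω) * D n ω (X i ω)) / n :=
        fun n => div_nonneg (Finset.sum_nonneg fun i _ => mul_nonneg (hK0 _) (hDnn n ω _))
          (Nat.cast_nonneg n)
      rw [tendsto_order]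
      constructor
      · intro a ha
        exact Filter.Eventually.of_forall fun n => lt_of_lt_of_le ha (havgnn n)
      · intro a ha
        obtain ⟨j, hj⟩ := hτ (a/(2*(CC+1))) (by positivity)
        set SFj := (F j).filter (fun x => 0 < q0 x) with hSFj
        have hDmax : Tendsto (fun n => ∑ x ∈ SFj, D n ω x) atTop (𝓝 0) := by
          have h : Tendsto (fun n => ∑ x ∈ SFj, D n ω x) atTop (𝓝 (∑ _x ∈ SFj, (0:ℝ))) :=
            tendsto_finset_sum SFj (fun x hx => hDl x (Finset.mem_filter.mp hx).2)
          rwa [Finset.sum_const_zero] at h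
        have hbound : ∀ n : ℕ, (∑ i ∈ Finset.range n, K 0 (X i ω) * D n ω (X i ω))/n
            ≤ (∑ x ∈ SFj, D n ω x) * ((∑ i ∈ Finset.range n, K 0 (X i ω))/n)
              + (Kq0 + Khat n) * ((∑ i ∈ Finset.range n, φt j (X i ω))/n) := by
          intro n
          have hptw : ∀ i, K 0 (X i ω) * D n ω (X i ω)
              ≤ K 0 (X i ω) * (∑ x ∈ SFj, D n ω x) + (Kq0 + Khat n) * φt j (X i ω) := by
            intro i
            by_cases hmem : X i ω ∈ F j
            · have h1 : D n ω (X i ω) ≤ ∑ x ∈ SFj, D n ω x :=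
                Finset.single_le_sum (fun x _ => hDnn n ω x)
                  (Finset.mem_filter.mpr ⟨hmem, hS i⟩)
              have h2 : φt j (X i ω) = 0 := by rw [hφtdef]; dsimp only; rw [if_pos hmem]
              rw [h2, mul_zero, add_zero]
              exact mul_le_mul_of_nonneg_left h1 (hK0 _)
            · have h2 : φt j (X i ω) = ψ (X i ω) := by
                rw [hφtdef]; dsimp only; rw [if_neg hmem]
              have hDb : D n ω (X i ω) ≤ (m:ℝ) * ((Kq0 + Khat n) * (1 + nrmX (X i ω) ^ γ)) := by
                rw [hDdef]
                dsimp only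
                calc ∑ x' ∈ M (X i ω), |Real.log (qhat n ω x' / qhat n ω (X i ω))
                      - Real.log (q0 x' / q0 (X i ω))|
                    ≤ ∑ _x' ∈ M (X i ω), ((Kq0 + Khat n) * (1 + nrmX (X i ω) ^ γ)) := by
                      refine Finset.sum_le_sum fun x' hx' => ?_
                      have ha1 := hghatb n ω (X i ω) x' hx'
                      have ha2 := hgq0b (X i ω) x' hx'
                      calc |Real.log (qhat n ω x' / qhat n ω (X i ω))
                          - Real.log (q0 x' / q0 (X i ω))|
                          ≤ |Real.log (qhat n ω x' / qhat n ω (X i ω))|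
                            + |Real.log (q0 x' / q0 (X i ω))| := abs_sub _ _
                        _ ≤ Khat n * (1 + nrmX (X i ω) ^ γ)
                            + Kq0 * (1 + nrmX (X i ω) ^ γ) := add_le_add ha1 ha2
                        _ = (Kq0 + Khat n) * (1 + nrmX (X i ω) ^ γ) := by ring
                  _ = (m:ℝ) * ((Kq0 + Khat n) * (1 + nrmX (X i ω) ^ γ)) := by
                      rw [Finset.sum_const, hM_card, nsmul_eq_mul]
              have h3 : K 0 (X i ω) * D n ω (X i ω) ≤ (Kq0 + Khat n) * ψ (X i ω) := by
                calc K 0 (X i ω) * D n ω (X i ω)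
                    ≤ K 0 (X i ω) * ((m:ℝ) * ((Kq0 + Khat n) * (1 + nrmX (X i ω) ^ γ))) :=
                      mul_le_mul_of_nonneg_left hDb (hK0 _)
                  _ = (Kq0 + Khat n) * ψ (X i ω) := by rw [hψdef]; dsimp only; ring
              rw [h2]
              refine le_trans h3 (le_add_of_nonneg_left ?_)
              exact mul_nonneg (hK0 _)
                (Finset.sum_nonneg fun x _ => hDnn n ω x)
          have hsum := Finset.sum_le_sum (fun i (_ : i ∈ Finset.range n) => hptw i)
          have hdiv := div_le_div_of_nonneg_right hsum (Nat.cast_nonneg n)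
          refine le_trans hdiv (le_of_eq ?_)
          rw [Finset.sum_add_distrib, add_div, ← Finset.sum_mul, ← Finset.mul_sum]
          rw [mul_comm (∑ i ∈ Finset.range n, K 0 (X i ω)) (∑ x ∈ SFj, D n ω x)]
          rw [mul_div_assoc, mul_div_assoc]
        have hev1 : ∀ᶠ n : ℕ in atTop,
            (∑ x ∈ SFj, D n ω x) * ((∑ i ∈ Finset.range n, K 0 (X i ω))/n) < a/2 := by
          have h := hDmax.mul hK0a
          rw [zero_mul] at h
          exact h.eventually_lt_const (by positivity)
        have hev2 : ∀ᶠ n : ℕ in atTop,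
            (∑ i ∈ Finset.range n, φt j (X i ω))/n < a/(2*(CC+1)) :=
          (hφa j).eventually_lt_const hj
        filter_upwards [hev1, hev2, hKb] with n h1 h2 h3
        have havgφnn : 0 ≤ (∑ i ∈ Finset.range n, φt j (X i ω))/n :=
          div_nonneg (Finset.sum_nonneg fun i _ => hφtnn j _) (Nat.cast_nonneg n)
        have hc1 : (Kq0 + Khat n) * ((∑ i ∈ Finset.range n, φt j (X i ω))/n)
            ≤ CC * ((∑ i ∈ Finset.range n, φt j (X i ω))/n) := by
          refine mul_le_mul_of_nonneg_right ?_ havgφnn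
          have h4 := le_max_left Kb (0:ℝ)
          rw [hCC]; linarith
        have hc2 : CC * ((∑ i ∈ Finset.range n, φt j (X i ω))/n)
            < CC * (a/(2*(CC+1))) := mul_lt_mul_of_pos_left h2 hCCpos
        have hc3 : CC * (a/(2*(CC+1))) ≤ a/2 := by
          rw [← mul_div_assoc, div_le_div_iff₀ (by positivity) (by norm_num : (0:ℝ) < 2)]
          nlinarith
        calc (∑ i ∈ Finset.range n, K 0 (X i ω) * D n ω (X i ω))/n
            ≤ (∑ x ∈ SFj, D n ω x) * ((∑ i ∈ Finset.range n, K 0 (X i ω))/n)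
              + (Kq0 + Khat n) * ((∑ i ∈ Finset.range n, φt j (X i ω))/n) := hbound n
          _ < a := by linarith
  -- final assembly
  filter_upwards [PII, hES, hEK0avg, hELip, hEf] with ω hPII hS hK0a hLipa hfa
  intro ε hε
  -- choose the resolution of the covering
  obtain ⟨k, hk⟩ := exists_nat_gt ((2*TLip + 1) * (2/ε))
  set δ : ℝ := 1/((k:ℝ)+1) with hδdef
  have hδpos : 0 < δ := by rw [hδdef]; positivity
  have hδsmall : δ * (2*TLip + 1) < ε/2 := by
    have hlt : (2*TLip+1) * (2/ε) < (k:ℝ) + 1 := lt_trans hk (by norm_num)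
    rw [hδdef, div_mul_eq_mul_div, div_lt_iff₀ (by positivity : (0:ℝ) < (k:ℝ)+1)]
    have h2 : ((2*TLip+1) * (2/ε)) * (ε/2) < ((k:ℝ)+1) * (ε/2) :=
      mul_lt_mul_of_pos_right hlt (by positivity)
    have h3 : ((2*TLip+1) * (2/ε)) * (ε/2) = 2*TLip+1 := by field_simp
    calc 1 * (2*TLip+1) = 2*TLip+1 := one_mul _
      _ < ((k:ℝ)+1)*(ε/2) := h3 ▸ h2
      _ = ε/2*((k:ℝ)+1) := mul_comm _ _
  -- eventual bounds
  have hev1 : ∀ᶠ n : ℕ in atTop, (2/(m:ℝ)) *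
      ((∑ i ∈ Finset.range n, K 0 (X i ω) * D n ω (X i ω))/n) < ε/4 := by
    have h := hPII.const_mul (2/(m:ℝ))
    rw [mul_zero] at h
    exact h.eventually_lt_const (by positivity)
  have hev2 : ∀ᶠ n : ℕ in atTop, ∀ θc ∈ tk k,
      |(∑ i ∈ Finset.range n, f θc (X i ω))/n - Lpop θc| < ε/8 := by
    rw [Set.Finite.eventually_all (htk2 k)]
    intro θc hθc
    have h := hfa k θc hθc
    have h0 : Tendsto (fun n : ℕ => |(∑ i ∈ Finset.range n, f θc (X i ω))/n - Lpop θc|)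
        atTop (𝓝 0) := by
      have h1 := (h.sub_const (Lpop θc)).abs
      simpa using h1
    exact h0.eventually_lt_const (by positivity)
  have hev3 : ∀ᶠ n : ℕ in atTop,
      (∑ i ∈ Finset.range n, Lip (X i ω))/n ≤ TLip + 1 :=
    hLipa.eventually_le_const (lt_add_one TLip)
  obtain ⟨N, hN⟩ := eventually_atTop.mp ((hev1.and hev2).and hev3)
  refine ⟨N, fun n hn θ hθ => ?_⟩
  obtain ⟨⟨h1, h2⟩, h3⟩ := hN n hn
  -- choose a nearby centre
  obtain ⟨θc, hθc, hdist⟩ : ∃ θc ∈ tk k, dist θ θc < δ := by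
    have hmem := htk3 k hθ
    simp only [Set.mem_iUnion] at hmem
    obtain ⟨y, hy, hmemy⟩ := hmem
    exact ⟨y, hy, hmemy⟩
  have hθcΘ : θc ∈ Θ := htk1 k hθc
  -- the four pieces
  have hA := hdecomp n ω θ hθ
  have hBB : |(∑ i ∈ Finset.range n, f θ (X i ω))/n
      - (∑ i ∈ Finset.range n, f θc (X i ω))/n|
      ≤ δ * ((∑ i ∈ Finset.range n, Lip (X i ω))/n) := by
    rw [div_sub_div_same, ← Finset.sum_sub_distrib, abs_div, Nat.abs_cast]
    have hnum : |∑ i ∈ Finset.range n, (f θ (X i ω) - f θc (X i ω))|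
        ≤ ∑ i ∈ Finset.range n, Lip (X i ω) * δ := by
      refine le_trans (Finset.abs_sum_le_sum_abs _ _) (Finset.sum_le_sum fun i _ => ?_)
      have hl := hflip (X i ω) (hS i) θc hθcΘ θ hθ
      have hnd : ‖θ - θc‖ ≤ δ := by
        rw [← dist_eq_norm]; exact hdist.le
      calc |f θ (X i ω) - f θc (X i ω)| ≤ Lip (X i ω) * ‖θ - θc‖ := hl
        _ ≤ Lip (X i ω) * δ := mul_le_mul_of_nonneg_left hnd (hLipnn _)
    calc |∑ i ∈ Finset.range n, (f θ (X i ω) - f θc (X i ω))| / n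
        ≤ (∑ i ∈ Finset.range n, Lip (X i ω) * δ) / n :=
          div_le_div_of_nonneg_right hnum (Nat.cast_nonneg n)
      _ = δ * ((∑ i ∈ Finset.range n, Lip (X i ω))/n) := by
          rw [← Finset.sum_mul, mul_comm, mul_div_assoc]
  have hCC : |(∑ i ∈ Finset.range n, f θc (X i ω))/n - Lpop θc| < ε/8 := h2 θc hθc
  have hDD : |Lpop θc - Lpop θ| ≤ TLip * δ := by
    have h := hLpopLip θ hθ θc hθcΘ
    refine le_trans h ?_
    refine mul_le_mul_of_nonneg_left ?_ hTLipnn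
    rw [← dist_eq_norm, dist_comm]
    exact hdist.le
  -- combine with the triangle inequality
  have htri : |Lhat n ω θ - Lpop θ|
      ≤ |Lhat n ω θ - (∑ i ∈ Finset.range n, f θ (X i ω))/n|
        + |(∑ i ∈ Finset.range n, f θ (X i ω))/n
            - (∑ i ∈ Finset.range n, f θc (X i ω))/n|
        + |(∑ i ∈ Finset.range n, f θc (X i ω))/n - Lpop θc|
        + |Lpop θc - Lpop θ| := by
    have t1 := abs_sub_le (Lhat n ω θ) ((∑ i ∈ Finset.range n, f θ (X i ω))/n) (Lpop θ)
    have t2 := abs_sub_le ((∑ i ∈ Finset.range n, f θ (X i ω))/n)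
      ((∑ i ∈ Finset.range n, f θc (X i ω))/n) (Lpop θ)
    have t3 := abs_sub_le ((∑ i ∈ Finset.range n, f θc (X i ω))/n) (Lpop θc) (Lpop θ)
    linarith
  have hδLip : δ * ((∑ i ∈ Finset.range n, Lip (X i ω))/n) ≤ δ * (TLip + 1) :=
    mul_le_mul_of_nonneg_left h3 hδpos.le
  have hfinal : ε/4 + δ * (TLip + 1) + ε/8 + TLip * δ ≤ ε := by nlinarith
  nlinarith [hA, hBB, hCC.le, hDD, htri, h1.le, hδLip]
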